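/- The full inclusion functor i : Δ ↪ Pos from the simplex category into the category of partially ordered sets preserves all colimits that exist in Δ: if a diagram D : J ⥤ Δ has a colimit cocone in Δ, then its image under i is a colimit cocone in Pos. -/

import Mathlib

open CategoryTheory Limits

/-- The full inclusion `i : Δ ↪ Pos` of the simplex category into the category of
partially ordered sets, sending `[n]` to the poset `{0, …, n}`. -/
def deltaToPartOrd : SimplexCategory ⥤ PartOrd where
  obj n := PartOrd.of (Fin (n.len + 1))
  map f := PartOrd.ofHom f.toOrderHom

-- Indicator of an upper set, as a monotone map.
open Classical in
noncomputable def upperIndicator {P Q : Type*} [Preorder P] [Preorder Q]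
    (q₀ q₁ : Q) (h01 : q₀ ≤ q₁) (U : Set P)
    (hU : ∀ a b, a ≤ b → a ∈ U → b ∈ U) : P →o Q where
  toFun p := if p ∈ U then q₁ else q₀
  monotone' := by
    intro a b hab
    dsimp only
    by_cases h : a ∈ U
    · rw [if_pos h, if_pos (hU a b hab h)]
    · rw [if_neg h]
      by_cases h' : b ∈ U
      · rw [if_pos h']; exact h01
      · rw [if_neg h']

/-- The full inclusion functor `i : Δ ↪ Pos` from the simplex category
into the category of partially ordered sets preserves all colimits that exist in `Δ`:
if a diagram `D : J ⥤ Δ` has a colimit cocone in `Δ`, then its image under `i` is a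
colimit cocone in `Pos`. -/
theorem deltaToPartOrd_preserves_existing_colimits
    {J : Type u} [Category.{v} J] (D : J ⥤ SimplexCategory)
    (c : Cocone D) (hc : Nonempty (IsColimit c)) :
    Nonempty (IsColimit (deltaToPartOrd.mapCocone c)) := by
  classical
  obtain ⟨hc⟩ := hc
  have h01 : (0 : Fin ((SimplexCategory.mk 1).len + 1)) ≤ 1 := by decide
  have h10 : ¬ (1 : Fin ((SimplexCategory.mk 1).len + 1)) ≤ 0 := by decide
  -- From a compatible family of monotone maps into `Fin 2`, the universal property of `c`
  -- produces a single monotone map out of `c.pt` restricting to the family.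
  have mkDesc : ∀ (χ : (j : J) → Fin ((D.obj j).len + 1) →o
        Fin ((SimplexCategory.mk 1).len + 1)),
      (∀ (j j' : J) (u : j ⟶ j') (y : Fin ((D.obj j).len + 1)),
        χ j' ((D.map u).toOrderHom y) = χ j y) →
      { g : c.pt ⟶ SimplexCategory.mk 1 //
          ∀ (j : J) (y : Fin ((D.obj j).len + 1)),
            g.toOrderHom ((c.ι.app j).toOrderHom y) = χ j y } := by
    intro χ hχ
    have hnat : ∀ (j j' : J) (u : j ⟶ j'),
        D.map u ≫ SimplexCategory.Hom.mk (χ j') =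
          SimplexCategory.Hom.mk (χ j) ≫ 𝟙 (SimplexCategory.mk 1) := by
      intro j j' u
      apply SimplexCategory.Hom.ext
      apply OrderHom.ext
      funext y
      simpa [SimplexCategory.comp_toOrderHom] using hχ j j' u y
    let t : Cocone D :=
      { pt := SimplexCategory.mk 1
        ι := { app := fun j => SimplexCategory.Hom.mk (χ j), naturality := hnat } }
    refine ⟨hc.desc t, ?_⟩
    intro j y
    have hfac := hc.fac t j
    calc (hc.desc t).toOrderHom ((c.ι.app j).toOrderHom y)
        = (c.ι.app j ≫ hc.desc t).toOrderHom y := rfl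
      _ = (t.ι.app j).toOrderHom y :=
          congrArg (fun f => SimplexCategory.Hom.toOrderHom f y) hfac
      _ = χ j y := rfl
  -- Step 1: the legs of the colimit cocone are jointly surjective.
  have hsurj : ∀ x : Fin (c.pt.len + 1),
      ∃ p : Σ j : J, Fin ((D.obj j).len + 1), (c.ι.app p.1).toOrderHom p.2 = x := by
    intro x
    by_contra hx
    have hne : ∀ (j : J) (y : Fin ((D.obj j).len + 1)),
        (c.ι.app j).toOrderHom y ≠ x := fun j y h => hx ⟨⟨j, y⟩, h⟩
    have h₁ : ∀ a b : Fin (c.pt.len + 1), a ≤ b → a ∈ {a | x ≤ a} → b ∈ {a | x ≤ a} :=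
      fun a b hab ha => le_trans ha hab
    have h₂ : ∀ a b : Fin (c.pt.len + 1), a ≤ b → a ∈ {a | x < a} → b ∈ {a | x < a} :=
      fun a b hab ha => lt_of_lt_of_le ha hab
    let f₁ : c.pt ⟶ SimplexCategory.mk 1 :=
      SimplexCategory.Hom.mk (upperIndicator 0 1 h01 {a | x ≤ a} h₁)
    let f₂ : c.pt ⟶ SimplexCategory.mk 1 :=
      SimplexCategory.Hom.mk (upperIndicator 0 1 h01 {a | x < a} h₂)
    have heq : f₁ = f₂ := by
      apply hc.hom_ext
      intro j
      apply SimplexCategory.Hom.ext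
      apply OrderHom.ext
      funext y
      show (upperIndicator 0 1 h01 {a | x ≤ a} h₁) ((c.ι.app j).toOrderHom y) =
        (upperIndicator 0 1 h01 {a | x < a} h₂) ((c.ι.app j).toOrderHom y)
      simp only [upperIndicator, OrderHom.coe_mk, Set.mem_setOf_eq]
      by_cases hcase : x ≤ (c.ι.app j).toOrderHom y
      · rw [if_pos hcase, if_pos (lt_of_le_of_ne hcase (Ne.symm (hne j y)))]
      · rw [if_neg hcase, if_neg (fun h => hcase (le_of_lt h))]
    have hx1 := congrArg (fun f => SimplexCategory.Hom.toOrderHom f x) heq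
    simp only [f₁, f₂, SimplexCategory.Hom.toOrderHom_mk] at hx1
    rw [show (upperIndicator 0 1 h01 {a | x ≤ a} h₁) x = 1 from if_pos (le_refl x),
        show (upperIndicator 0 1 h01 {a | x < a} h₂) x = 0 from if_neg (lt_irrefl x)] at hx1
    exact h10 (le_of_eq hx1)
  -- Step 2: the key comparison lemma.
  have hkey : ∀ (s : Cocone (D ⋙ deltaToPartOrd)) (j k : J)
      (y : Fin ((D.obj j).len + 1)) (z : Fin ((D.obj k).len + 1)),
      (c.ι.app j).toOrderHom y ≤ (c.ι.app k).toOrderHom z →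
      (show Fin ((D.obj j).len + 1) →o s.pt from (s.ι.app j).hom) y ≤
        (show Fin ((D.obj k).len + 1) →o s.pt from (s.ι.app k).hom) z := by
    intro s j k y z hle
    set σ : ∀ j : J, Fin ((D.obj j).len + 1) →o s.pt :=
      fun j => show Fin ((D.obj j).len + 1) →o s.pt from (s.ι.app j).hom with hσ
    show σ j y ≤ σ k z
    by_contra hcon
    have hUup : ∀ a b : s.pt, a ≤ b → a ∈ {p | σ j y ≤ p} → b ∈ {p | σ j y ≤ p} :=
      fun a b hab ha => le_trans ha hab
    have hχnat : ∀ (j₁ j₂ : J) (u : j₁ ⟶ j₂) (y₁ : Fin ((D.obj j₁).len + 1)),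
        ((upperIndicator 0 1 h01 {p | σ j y ≤ p} hUup).comp (σ j₂)) ((D.map u).toOrderHom y₁) =
        ((upperIndicator 0 1 h01 {p | σ j y ≤ p} hUup).comp (σ j₁)) y₁ := by
      intro j₁ j₂ u y₁
      have hw : σ j₂ ((D.map u).toOrderHom y₁) = σ j₁ y₁ := by
        have hsw := s.w u
        have := congrArg (fun f =>
          (show Fin ((D.obj j₁).len + 1) →o s.pt from f.hom) y₁) hsw
        simpa [hσ, deltaToPartOrd] using this
      simp [hw]
    obtain ⟨g, hg⟩ := mkDesc
      (fun j₁ => (upperIndicator 0 1 h01 {p | σ j y ≤ p} hUup).comp (σ j₁)) hχnat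
    have h1 : g.toOrderHom ((c.ι.app j).toOrderHom y) = 1 := by
      rw [hg j y]
      exact if_pos (le_refl (σ j y))
    have h0 : g.toOrderHom ((c.ι.app k).toOrderHom z) = 0 := by
      rw [hg k z]
      exact if_neg hcon
    have hmono := g.toOrderHom.monotone hle
    rw [h1, h0] at hmono
    exact h10 hmono
  -- Step 3: build the colimit.
  refine ⟨{ desc := ?_, fac := ?_, uniq := ?_ }⟩
  · intro s
    exact PartOrd.ofHom (⟨fun x => (show Fin ((D.obj (hsurj x).choose.1).len + 1) →o s.pt from
        (s.ι.app (hsurj x).choose.1).hom) (hsurj x).choose.2, by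
      intro a b hab
      exact hkey s _ _ _ _
        (by rw [(hsurj a).choose_spec, (hsurj b).choose_spec]; exact hab)⟩ :
      Fin (c.pt.len + 1) →o s.pt)
  · intro s j
    apply PartOrd.hom_ext
    apply OrderHom.ext
    funext y
    show (show Fin ((D.obj (hsurj ((c.ι.app j).toOrderHom y)).choose.1).len + 1) →o s.pt from
        (s.ι.app (hsurj ((c.ι.app j).toOrderHom y)).choose.1).hom)
        (hsurj ((c.ι.app j).toOrderHom y)).choose.2 =
      (show Fin ((D.obj j).len + 1) →o s.pt from (s.ι.app j).hom) y
    have h := (hsurj ((c.ι.app j).toOrderHom y)).choose_spec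
    exact le_antisymm (hkey s _ _ _ _ (le_of_eq h)) (hkey s _ _ _ _ (ge_of_eq h))
  · intro s m hm
    apply PartOrd.hom_ext
    apply OrderHom.ext
    funext x
    have h := (hsurj x).choose_spec
    have hm' := hm (hsurj x).choose.1
    calc (show Fin (c.pt.len + 1) →o s.pt from m.hom) x
        = (show Fin (c.pt.len + 1) →o s.pt from m.hom)
            ((c.ι.app (hsurj x).choose.1).toOrderHom (hsurj x).choose.2) := by rw [h]
      _ = (show Fin ((D.obj (hsurj x).choose.1).len + 1) →o s.pt from
            ((deltaToPartOrd.mapCocone c).ι.app (hsurj x).choose.1 ≫ m).hom) (hsurj x).choose.2 := rfl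
      _ = (show Fin ((D.obj (hsurj x).choose.1).len + 1) →o s.pt from
            (s.ι.app (hsurj x).choose.1).hom) (hsurj x).choose.2 := by rw [hm']
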